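/- Let (S, Σ, μ) be a measure space, let 0 < p < 2, and let f, g : S → [0,∞] be measurable. Suppose there is C₀ > 0 such that for every λ > 0, μ({x : f(x) > λ}) ≤ C₀ μ({x : g(x) > λ}) + C₀ λ^{−2} ∫_{{g ≤ λ}} g² dμ. Then ∫_S f^p dμ ≤ (2C₀/(2−p)) ∫_S g^p dμ. -/

import Mathlib

open MeasureTheory Set
open scoped ENNReal

lemma my_layer {S : Type*} [MeasurableSpace S] (μ : Measure S) {p : ℝ} (hp : 0 < p)
    {h : S → ℝ≥0∞} (hm : Measurable h) (hfin : ∀ᵐ x ∂μ, h x ≠ ∞) :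
    ∫⁻ x, h x ^ p ∂μ =
      ENNReal.ofReal p *
        ∫⁻ t in Ioi (0:ℝ), μ {x | ENNReal.ofReal t < h x} * ENNReal.ofReal (t ^ (p-1)) := by
  have hnull : μ {x | h x = ∞} = 0 := by
    simpa [ae_iff] using hfin
  have h1 : ∫⁻ x, h x ^ p ∂μ = ∫⁻ x, ENNReal.ofReal ((h x).toReal ^ p) ∂μ := by
    refine lintegral_congr_ae ?_
    filter_upwards [hfin] with x hx
    rw [← ENNReal.ofReal_rpow_of_nonneg ENNReal.toReal_nonneg hp.le, ENNReal.ofReal_toReal hx]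
  rw [h1, lintegral_rpow_eq_lintegral_meas_lt_mul μ
    (ae_of_all _ fun x => ENNReal.toReal_nonneg) hm.ennreal_toReal.aemeasurable hp]
  congr 1
  refine setLIntegral_congr_fun measurableSet_Ioi (fun t ht => ?_)
  have hsub : {x | t < (h x).toReal} ⊆ {x | ENNReal.ofReal t < h x} := by
    intro x hx
    have hne : h x ≠ ∞ := by
      intro hinf
      simp only [Set.mem_setOf_eq, hinf, ENNReal.toReal_top] at hx
      exact absurd (ht.trans hx) (lt_irrefl 0)
    exact (ENNReal.ofReal_lt_iff_lt_toReal (le_of_lt ht) hne).2 hx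
  have heq : μ {x | t < (h x).toReal} = μ {x | ENNReal.ofReal t < h x} := by
    refine le_antisymm (measure_mono hsub) ?_
    have hsub2 : {x | ENNReal.ofReal t < h x} ⊆ {x | t < (h x).toReal} ∪ {x | h x = ∞} := by
      intro x hx
      by_cases hne : h x = ∞
      · exact Or.inr hne
      · exact Or.inl ((ENNReal.ofReal_lt_iff_lt_toReal (le_of_lt ht) hne).1 hx)
    calc μ {x | ENNReal.ofReal t < h x} ≤ μ ({x | t < (h x).toReal} ∪ {x | h x = ∞}) :=
          measure_mono hsub2
      _ ≤ μ {x | t < (h x).toReal} + μ {x | h x = ∞} := measure_union_le _ _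
      _ = μ {x | t < (h x).toReal} := by rw [hnull, add_zero]
  rw [heq]

/-- Chebyshev. -/
lemma my_cheb {S : Type*} [MeasurableSpace S] (μ : Measure S) {p : ℝ} (hp : 0 < p)
    {g : S → ℝ≥0∞} (hg : Measurable g) {a : ℝ≥0∞} (ha : a ≠ 0) (ha' : a ≠ ∞) :
    μ {x | a < g x} ≤ (∫⁻ x, g x ^ p ∂μ) / a ^ p := by
  have h1 : {x | a < g x} ⊆ {x | a ^ p ≤ g x ^ p} := fun x hx =>
    ENNReal.rpow_le_rpow (le_of_lt hx) hp.le
  refine le_trans (measure_mono h1) ?_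
  have hap : a ^ p ≠ 0 := by
    simp only [ne_eq, ENNReal.rpow_eq_zero_iff, not_or]
    exact ⟨fun h => ha h.1, fun h => absurd h.2 (not_lt.2 hp.le)⟩
  have hap' : a ^ p ≠ ∞ := ENNReal.rpow_ne_top_of_nonneg hp.le ha'
  rw [ENNReal.le_div_iff_mul_le (Or.inl hap) (Or.inl hap'), mul_comm]
  exact mul_meas_ge_le_lintegral (hg.pow measurable_const) (a ^ p)

/-- the distributional-inequality-to-`L^p` implication for `0 < p < 2`:
if `μ({f > λ}) ≤ C₀ μ({g > λ}) + C₀ λ⁻² ∫_{{g ≤ λ}} g² dμ` for every `λ > 0`, then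
`∫ f^p dμ ≤ (2C₀/(2-p)) ∫ g^p dμ`. -/
theorem statement16 {S : Type*} [MeasurableSpace S] (μ : Measure S)
    (p : ℝ) (hp : 0 < p) (hp2 : p < 2)
    (f g : S → ℝ≥0∞) (hf : Measurable f) (hg : Measurable g)
    (C₀ : ℝ) (hC₀ : 0 < C₀)
    (hdist : ∀ l : ℝ, 0 < l →
      μ {x | ENNReal.ofReal l < f x} ≤
        ENNReal.ofReal C₀ * μ {x | ENNReal.ofReal l < g x} +
          ENNReal.ofReal C₀ * (ENNReal.ofReal l)⁻¹ ^ 2 *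
            ∫⁻ x in {x | g x ≤ ENNReal.ofReal l}, g x ^ 2 ∂μ) :
    ∫⁻ x, f x ^ p ∂μ ≤ ENNReal.ofReal (2 * C₀ / (2 - p)) * ∫⁻ x, g x ^ p ∂μ := by
  by_cases hG : ∫⁻ x, g x ^ p ∂μ = ∞
  · have hc : ENNReal.ofReal (2 * C₀ / (2 - p)) ≠ 0 := by
      simp only [ne_eq, ENNReal.ofReal_eq_zero, not_le]
      have : (0:ℝ) < 2 - p := by linarith
      positivity
    rw [hG, ENNReal.mul_top hc]
    exact le_top
  have hp2' : (0:ℝ) < 2 - p := by linarith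
  have hgp : Measurable fun x => g x ^ p := hg.pow measurable_const
  have hgfin : ∀ᵐ x ∂μ, g x ≠ ∞ := by
    filter_upwards [ae_lt_top hgp hG] with x hx
    intro hxt
    rw [hxt, ENNReal.top_rpow_of_pos hp] at hx
    exact absurd hx (lt_irrefl _)
  -- the distributional bound in closed form
  have hbound : ∀ l : ℝ, 0 < l → μ {x | ENNReal.ofReal l < f x} ≤
      ENNReal.ofReal (2 * C₀) * (ENNReal.ofReal l) ^ (-p) * ∫⁻ x, g x ^ p ∂μ := by
    intro l hl
    have hdist' := hdist l hl
    set L := ENNReal.ofReal l with hLdef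
    have hL0 : L ≠ 0 := by simp [hLdef, hl]
    have hLt : L ≠ ∞ := ENNReal.ofReal_ne_top
    have e1 : μ {x | L < g x} ≤ L ^ (-p) * (∫⁻ x, g x ^ p ∂μ) := by
      refine le_trans (my_cheb μ hp hg hL0 hLt) ?_
      rw [div_eq_mul_inv, ← ENNReal.rpow_neg, mul_comm]
    have e2 : ∫⁻ x in {x | g x ≤ L}, g x ^ 2 ∂μ ≤ L ^ (2 - p) * (∫⁻ x, g x ^ p ∂μ) := by
      have hpt : ∀ x ∈ {x | g x ≤ L}, g x ^ 2 ≤ L ^ (2 - p) * g x ^ p := by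
        intro x hx
        by_cases hgx0 : g x = 0
        · simp [hgx0]
        · have hgxt : g x ≠ ∞ := (lt_of_le_of_lt hx (lt_top_iff_ne_top.2 hLt)).ne
          calc g x ^ 2 = g x ^ ((2:ℝ)) := (ENNReal.rpow_two _).symm
            _ = g x ^ (2 - p) * g x ^ p := by
                rw [← ENNReal.rpow_add _ _ hgx0 hgxt]; norm_num
            _ ≤ L ^ (2 - p) * g x ^ p :=
                mul_le_mul_left (ENNReal.rpow_le_rpow hx (by linarith)) _
      calc ∫⁻ x in {x | g x ≤ L}, g x ^ 2 ∂μ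
          ≤ ∫⁻ x in {x | g x ≤ L}, L ^ (2 - p) * g x ^ p ∂μ :=
            setLIntegral_mono' (measurableSet_le hg measurable_const) hpt
        _ ≤ ∫⁻ x, L ^ (2 - p) * g x ^ p ∂μ := setLIntegral_le_lintegral _ _
        _ = L ^ (2 - p) * (∫⁻ x, g x ^ p ∂μ) := lintegral_const_mul _ hgp
    have hL2 : L⁻¹ ^ 2 = L ^ (-2:ℝ) := by
      rw [ENNReal.rpow_neg, ENNReal.rpow_two, ENNReal.inv_pow]
    have hL3 : L ^ (-2:ℝ) * L ^ (2 - p) = L ^ (-p) := by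
      rw [← ENNReal.rpow_add _ _ hL0 hLt, show (-2:ℝ)+(2-p) = -p by ring]
    have h2C : ENNReal.ofReal (2 * C₀) = 2 * ENNReal.ofReal C₀ := by
      rw [ENNReal.ofReal_mul (by norm_num : (0:ℝ) ≤ 2)]
      norm_num
    calc μ {x | L < f x}
        ≤ ENNReal.ofReal C₀ * μ {x | L < g x} +
            ENNReal.ofReal C₀ * L⁻¹ ^ 2 * ∫⁻ x in {x | g x ≤ L}, g x ^ 2 ∂μ := hdist'
      _ ≤ ENNReal.ofReal C₀ * (L ^ (-p) * (∫⁻ x, g x ^ p ∂μ)) +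
            ENNReal.ofReal C₀ * L⁻¹ ^ 2 * (L ^ (2 - p) * (∫⁻ x, g x ^ p ∂μ)) := by gcongr
      _ = ENNReal.ofReal (2 * C₀) * L ^ (-p) * (∫⁻ x, g x ^ p ∂μ) := by
          rw [hL2, ← hL3, h2C]; ring
  -- f is a.e. finite
  have hffin : ∀ᵐ x ∂μ, f x ≠ ∞ := by
    rw [ae_iff]
    simp only [ne_eq, not_not]
    by_contra hm0
    set K := ENNReal.ofReal (2 * C₀) * ∫⁻ x, g x ^ p ∂μ with hKdef
    set m := μ {x | f x = ⊤} with hmdef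
    have hKt : K ≠ ∞ := ENNReal.mul_ne_top ENNReal.ofReal_ne_top hG
    have hdivt : K / m ≠ ∞ := (ENNReal.div_lt_top hKt hm0).ne
    have hkey : ∀ l : ℝ, 0 < l → (ENNReal.ofReal l) ^ p ≤ K / m := by
      intro l hl
      have hL0 : ENNReal.ofReal l ≠ 0 := by simp [hl]
      have hLt : ENNReal.ofReal l ≠ ∞ := ENNReal.ofReal_ne_top
      have hLp0 : (ENNReal.ofReal l) ^ p ≠ 0 := by
        simp only [ne_eq, ENNReal.rpow_eq_zero_iff, not_or, not_and]
        exact ⟨fun h => absurd h hL0, fun h => absurd h hLt⟩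
      have hLpt : (ENNReal.ofReal l) ^ p ≠ ∞ := ENNReal.rpow_ne_top_of_nonneg hp.le hLt
      have h1 : m ≤ K / (ENNReal.ofReal l) ^ p := by
        calc m ≤ μ {x | ENNReal.ofReal l < f x} := by
              refine measure_mono fun x hx => ?_
              simp only [mem_setOf_eq] at *
              rw [hx]
              exact ENNReal.ofReal_lt_top
          _ ≤ ENNReal.ofReal (2 * C₀) * (ENNReal.ofReal l) ^ (-p) * ∫⁻ x, g x ^ p ∂μ :=
              hbound l hl
          _ = K / (ENNReal.ofReal l) ^ p := by
              rw [hKdef, div_eq_mul_inv, ← ENNReal.rpow_neg]; ring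
      have h2 : m * (ENNReal.ofReal l) ^ p ≤ K :=
        (ENNReal.le_div_iff_mul_le (Or.inl hLp0) (Or.inl hLpt)).1 h1
      exact (ENNReal.le_div_iff_mul_le (Or.inl hm0) (Or.inr hKt)).2 (by rwa [mul_comm])
    set D := (K / m).toReal + 1 with hDdef
    have hD : 0 < D := by positivity
    have hl : 0 < D ^ (1/p) := Real.rpow_pos_of_pos hD _
    have hlp : (D ^ (1/p)) ^ p = D := by
      rw [← Real.rpow_mul hD.le, one_div, inv_mul_cancel₀ hp.ne', Real.rpow_one]
    have hcontr := hkey (D ^ (1/p)) hl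
    rw [ENNReal.ofReal_rpow_of_pos hl, hlp] at hcontr
    have hlt : K / m < ENNReal.ofReal D := by
      conv_lhs => rw [← ENNReal.ofReal_toReal hdivt]
      rw [ENNReal.ofReal_lt_ofReal_iff hD, hDdef]
      linarith
    exact absurd (lt_of_lt_of_le hlt hcontr) (lt_irrefl _)
  -- setup for the main computation
  set w : ℝ → ℝ≥0∞ := fun t => ENNReal.ofReal (t ^ (p-1)) with hwdef
  have hLf : ∫⁻ x, f x ^ p ∂μ =
      ENNReal.ofReal p * ∫⁻ t in Ioi (0:ℝ), μ {x | ENNReal.ofReal t < f x} * w t :=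
    my_layer μ hp hf hffin
  have hLg : ∫⁻ x, g x ^ p ∂μ =
      ENNReal.ofReal p * ∫⁻ t in Ioi (0:ℝ), μ {x | ENNReal.ofReal t < g x} * w t :=
    my_layer μ hp hg hgfin
  set sNZ : Set S := {x | g x ≠ 0} with hsNZdef
  have hNZ : MeasurableSet sNZ := (hg (measurableSet_singleton 0)).compl
  set ν := μ.restrict sNZ with hνdef
  have hg0m : MeasurableSet {x | g x = 0} := hg (measurableSet_singleton 0)
  haveI hνfin : SigmaFinite ν := by
    refine Measure.sigmaFinite_of_countable
      (countable_range (fun n : ℕ => ({x | ((n:ℝ≥0∞))⁻¹ < g x} ∪ {x | g x = 0}))) ?_ ?_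
    · rintro s ⟨n, rfl⟩
      have h0 : ν {x | g x = 0} = 0 := by
        rw [hνdef, Measure.restrict_apply hg0m]
        convert measure_empty (μ := μ)
        ext x
        simp [hsNZdef]
      refine lt_of_le_of_lt (measure_union_le _ _) ?_
      rw [h0, add_zero]
      rcases Nat.eq_zero_or_pos n with hn | hn
      · subst hn
        have hempty : {x | ((0:ℕ):ℝ≥0∞)⁻¹ < g x} = (∅ : Set S) := by
          ext x
          simp [not_top_lt]
        rw [hempty]
        simp
      · have ha0 : ((n:ℝ≥0∞))⁻¹ ≠ 0 := by simp
        have hat : ((n:ℝ≥0∞))⁻¹ ≠ ∞ := by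
          simp [hn.ne']
        have hap0 : ((n:ℝ≥0∞))⁻¹ ^ p ≠ 0 := by
          simp only [ne_eq, ENNReal.rpow_eq_zero_iff, not_or, not_and]
          exact ⟨fun h => absurd h ha0, fun h => absurd h hat⟩
        refine lt_of_le_of_lt (le_trans (Measure.restrict_apply_le _ _)
          (my_cheb μ hp hg ha0 hat)) ?_
        exact ENNReal.div_lt_top hG hap0
    · rw [sUnion_range]
      ext x
      simp only [mem_iUnion, mem_univ, iff_true, mem_union, mem_setOf_eq]
      by_cases hx : g x = 0
      · exact ⟨0, Or.inr hx⟩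
      · obtain ⟨n, hn⟩ := ENNReal.exists_inv_nat_lt hx
        exact ⟨n, Or.inl hn⟩
  set A : ℝ → Set S := fun t => {x | g x ≤ ENNReal.ofReal t} with hAdef
  have hA : ∀ t, MeasurableSet (A t) := fun t => measurableSet_le hg measurable_const
  have hmuν : ∀ t : ℝ, ∫⁻ x in A t, g x ^ 2 ∂μ = ∫⁻ x in A t, g x ^ 2 ∂ν := by
    intro t
    rw [hνdef, Measure.restrict_restrict (hA t)]
    have hz : ∫⁻ x in A t \ sNZ, g x ^ 2 ∂μ = 0 := by
      have h0 : ∀ x ∈ A t \ sNZ, g x ^ 2 = (fun _ => (0:ℝ≥0∞)) x := by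
        intro x hx
        have hgx : g x = 0 := by simpa [hsNZdef] using hx.2
        simp [hgx]
      rw [setLIntegral_congr_fun ((hA t).diff hNZ) h0, lintegral_zero]
    rw [← lintegral_inter_add_diff (fun x => g x ^ 2) (A t) hNZ, hz, add_zero]
  set Φ : ℝ → S → ℝ≥0∞ :=
    fun t x => ENNReal.ofReal (t ^ (p-3)) * (A t).indicator (fun y => g y ^ 2) x with hΦdef
  have hΦm : Measurable (Function.uncurry Φ) := by
    have hset : MeasurableSet {q : ℝ × S | g q.2 ≤ ENNReal.ofReal q.1} :=
      measurableSet_le (hg.comp measurable_snd) (ENNReal.measurable_ofReal.comp measurable_fst)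
    have huneq : Function.uncurry Φ = fun q : ℝ × S =>
        ENNReal.ofReal (q.1 ^ (p-3)) *
          ({q : ℝ × S | g q.2 ≤ ENNReal.ofReal q.1}.indicator (fun q => g q.2 ^ 2) q) := by
      funext q
      simp only [Function.uncurry, hΦdef, Set.indicator_apply, hAdef, mem_setOf_eq]
    rw [huneq]
    exact ((measurable_fst.pow measurable_const).ennreal_ofReal).mul
      (((hg.comp measurable_snd).pow measurable_const).indicator hset)
  have hinner : ∀ᵐ x ∂ν, (∫⁻ t in Ioi (0:ℝ), Φ t x) =
      ENNReal.ofReal (1/(2-p)) * g x ^ p := by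
    filter_upwards [ae_restrict_mem hNZ, ae_restrict_of_ae hgfin] with x hx1 hx2
    set c := (g x).toReal with hcdef
    have hx1' : g x ≠ 0 := hx1
    have hc : 0 < c := ENNReal.toReal_pos hx1' hx2
    have hgx : g x = ENNReal.ofReal c := (ENNReal.ofReal_toReal hx2).symm
    have hgx2 : g x ^ 2 ≠ ∞ := by
      rw [hgx]
      exact ENNReal.pow_ne_top ENNReal.ofReal_ne_top
    have hsetx : ∀ t : ℝ, x ∈ A t ↔ t ∈ Ici c := by
      intro t
      simp only [hAdef, mem_setOf_eq, mem_Ici]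
      constructor
      · intro h
        have h2 := ENNReal.toReal_mono ENNReal.ofReal_ne_top h
        rw [ENNReal.toReal_ofReal'] at h2
        rcases le_total t 0 with ht0 | ht0
        · rw [max_eq_right ht0] at h2
          exact absurd (lt_of_lt_of_le hc h2) (lt_irrefl 0)
        · rwa [max_eq_left ht0] at h2
      · intro h
        rw [hgx]
        exact ENNReal.ofReal_le_ofReal h
    have hind : ∀ t : ℝ, Φ t x =
        (Ici c).indicator (fun t => ENNReal.ofReal (t ^ (p-3)) * g x ^ 2) t := by
      intro t
      by_cases ht : t ∈ Ici c
      · rw [indicator_of_mem ht]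
        simp only [hΦdef]
        rw [indicator_of_mem ((hsetx t).2 ht)]
      · rw [indicator_of_notMem ht]
        simp only [hΦdef]
        rw [indicator_of_notMem (fun hmem => ht ((hsetx t).1 hmem)), mul_zero]
    have hIci : ∫⁻ t in Ici c, ENNReal.ofReal (t ^ (p-3)) =
        ENNReal.ofReal (c ^ (p-2) / (2-p)) := by
      rw [← restrict_Ioi_eq_restrict_Ici]
      rw [← ofReal_integral_eq_lintegral_ofReal ((integrableOn_Ioi_rpow_iff hc).2 (by linarith))
        (by
          filter_upwards [ae_restrict_mem measurableSet_Ioi] with t ht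
          exact Real.rpow_nonneg (le_of_lt (hc.trans ht)) _)]
      rw [integral_Ioi_rpow_of_lt (by linarith) hc]
      congr 1
      rw [show p - 3 + 1 = p - 2 by ring, neg_div, ← div_neg, neg_sub]
    calc ∫⁻ t in Ioi (0:ℝ), Φ t x
        = ∫⁻ t in Ioi (0:ℝ),
            (Ici c).indicator (fun t => ENNReal.ofReal (t ^ (p-3)) * g x ^ 2) t :=
          lintegral_congr fun t => hind t
      _ = ∫⁻ t in Ici c ∩ Ioi (0:ℝ), ENNReal.ofReal (t ^ (p-3)) * g x ^ 2 := by
          rw [lintegral_indicator measurableSet_Ici, Measure.restrict_restrict measurableSet_Ici]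
      _ = ∫⁻ t in Ici c, ENNReal.ofReal (t ^ (p-3)) * g x ^ 2 := by
          rw [show Ici c ∩ Ioi (0:ℝ) = Ici c from
            inter_eq_self_of_subset_left fun t ht => lt_of_lt_of_le hc ht]
      _ = (∫⁻ t in Ici c, ENNReal.ofReal (t ^ (p-3))) * g x ^ 2 :=
          lintegral_mul_const' _ _ hgx2
      _ = ENNReal.ofReal (c ^ (p-2) / (2-p)) * g x ^ 2 := by rw [hIci]
      _ = ENNReal.ofReal (1/(2-p)) * g x ^ p := by
          rw [hgx, ← ENNReal.ofReal_pow hc.le, ENNReal.ofReal_rpow_of_pos hc,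
            ← ENNReal.ofReal_mul (by positivity), ← ENNReal.ofReal_mul (by positivity)]
          congr 1
          have hkey2 : c ^ (2:ℕ) * c ^ (p-2) = c ^ p := by
            rw [← Real.rpow_natCast c 2, ← Real.rpow_add hc]
            norm_num
          field_simp
          linear_combination hkey2
  -- term A
  have hwm : Measurable w := (measurable_id.pow measurable_const).ennreal_ofReal
  have hgm_anti : Antitone fun t : ℝ => μ {x | ENNReal.ofReal t < g x} := by
    intro t s hts
    exact measure_mono fun x hx => lt_of_le_of_lt (ENNReal.ofReal_le_ofReal hts) hx
  have hT1wm : Measurable fun t : ℝ =>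
      (ENNReal.ofReal C₀ * μ {x | ENNReal.ofReal t < g x}) * w t :=
    ((hgm_anti.measurable).const_mul _).mul hwm
  have hchainA : ∫⁻ t in Ioi (0:ℝ), (ENNReal.ofReal C₀ * μ {x | ENNReal.ofReal t < g x}) * w t =
      ENNReal.ofReal C₀ * ∫⁻ t in Ioi (0:ℝ), μ {x | ENNReal.ofReal t < g x} * w t := by
    rw [← lintegral_const_mul _ (by exact hgm_anti.measurable.mul hwm : Measurable fun t => μ {x | ENNReal.ofReal t < g x} * w t)]
    exact lintegral_congr fun t => by ring
  -- term B
  have hchainB : ∫⁻ t in Ioi (0:ℝ),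
        (ENNReal.ofReal C₀ * (ENNReal.ofReal t)⁻¹ ^ 2 * ∫⁻ x in A t, g x ^ 2 ∂μ) * w t
      ≤ ENNReal.ofReal C₀ * (ENNReal.ofReal (1/(2-p)) * ∫⁻ x, g x ^ p ∂μ) := by
    have step1 : ∫⁻ t in Ioi (0:ℝ),
          (ENNReal.ofReal C₀ * (ENNReal.ofReal t)⁻¹ ^ 2 * ∫⁻ x in A t, g x ^ 2 ∂μ) * w t
        = ENNReal.ofReal C₀ * ∫⁻ t in Ioi (0:ℝ), ∫⁻ x, Φ t x ∂ν := by
      rw [← lintegral_const_mul' _ _ ENNReal.ofReal_ne_top]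
      refine setLIntegral_congr_fun measurableSet_Ioi (fun t ht => ?_)
      have ht' : (0:ℝ) < t := ht
      have hLt0 : ENNReal.ofReal t ≠ 0 := by
        simp only [ne_eq, ENNReal.ofReal_eq_zero, not_le]
        exact ht'
      have hw3 : (ENNReal.ofReal t)⁻¹ ^ 2 * w t = ENNReal.ofReal (t ^ (p-3)) := by
        simp only [hwdef]
        rw [show ((ENNReal.ofReal t)⁻¹ ^ 2) = ENNReal.ofReal t ^ (-2:ℝ) by
              rw [ENNReal.rpow_neg, ENNReal.rpow_two, ENNReal.inv_pow],
          ← ENNReal.ofReal_rpow_of_pos ht',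
          ← ENNReal.rpow_add _ _ hLt0 ENNReal.ofReal_ne_top,
          show (-2:ℝ) + (p-1) = p - 3 by ring,
          ENNReal.ofReal_rpow_of_pos ht']
      have hΦint : ∫⁻ x, Φ t x ∂ν = ENNReal.ofReal (t ^ (p-3)) * ∫⁻ x in A t, g x ^ 2 ∂μ := by
        simp only [hΦdef]
        rw [lintegral_const_mul _ ((hg.pow measurable_const).indicator (hA t)),
          lintegral_indicator (hA t), ← hmuν t]
      rw [hΦint, ← hw3]
      ring
    have step2 : ∫⁻ t in Ioi (0:ℝ), ∫⁻ x, Φ t x ∂ν = ∫⁻ x, (∫⁻ t in Ioi (0:ℝ), Φ t x) ∂ν :=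
      lintegral_lintegral_swap hΦm.aemeasurable
    rw [step1, step2]
    gcongr
    calc ∫⁻ x, (∫⁻ t in Ioi (0:ℝ), Φ t x) ∂ν
        = ∫⁻ x, ENNReal.ofReal (1/(2-p)) * g x ^ p ∂ν := lintegral_congr_ae hinner
      _ = ENNReal.ofReal (1/(2-p)) * ∫⁻ x, g x ^ p ∂ν := lintegral_const_mul _ hgp
      _ ≤ ENNReal.ofReal (1/(2-p)) * ∫⁻ x, g x ^ p ∂μ := by
          gcongr
          rw [hνdef]
          exact Measure.restrict_le_self
  -- final computation
  calc ∫⁻ x, f x ^ p ∂μ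
      = ENNReal.ofReal p * ∫⁻ t in Ioi (0:ℝ), μ {x | ENNReal.ofReal t < f x} * w t := hLf
    _ ≤ ENNReal.ofReal p * ∫⁻ t in Ioi (0:ℝ),
          (ENNReal.ofReal C₀ * μ {x | ENNReal.ofReal t < g x} +
            ENNReal.ofReal C₀ * (ENNReal.ofReal t)⁻¹ ^ 2 * ∫⁻ x in A t, g x ^ 2 ∂μ) * w t := by
        refine mul_le_mul_right (setLIntegral_mono' measurableSet_Ioi fun t ht => ?_) _
        exact mul_le_mul_left (hdist t ht) _
    _ = ENNReal.ofReal p *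
          ((∫⁻ t in Ioi (0:ℝ), (ENNReal.ofReal C₀ * μ {x | ENNReal.ofReal t < g x}) * w t) +
            ∫⁻ t in Ioi (0:ℝ),
              (ENNReal.ofReal C₀ * (ENNReal.ofReal t)⁻¹ ^ 2 * ∫⁻ x in A t, g x ^ 2 ∂μ) * w t) := by
        rw [← lintegral_add_left hT1wm]
        congr 1
        exact lintegral_congr fun t => by ring
    _ ≤ ENNReal.ofReal p *
          (ENNReal.ofReal C₀ * (∫⁻ t in Ioi (0:ℝ), μ {x | ENNReal.ofReal t < g x} * w t) +
            ENNReal.ofReal C₀ * (ENNReal.ofReal (1/(2-p)) * ∫⁻ x, g x ^ p ∂μ)) :=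
        mul_le_mul_right (add_le_add (le_of_eq hchainA) hchainB) _
    _ = ENNReal.ofReal C₀ *
          (ENNReal.ofReal p * ∫⁻ t in Ioi (0:ℝ), μ {x | ENNReal.ofReal t < g x} * w t) +
          ENNReal.ofReal p * ENNReal.ofReal C₀ * ENNReal.ofReal (1/(2-p)) * ∫⁻ x, g x ^ p ∂μ := by
        ring
    _ = ENNReal.ofReal C₀ * ∫⁻ x, g x ^ p ∂μ +
          ENNReal.ofReal p * ENNReal.ofReal C₀ * ENNReal.ofReal (1/(2-p)) * ∫⁻ x, g x ^ p ∂μ := by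
        rw [← hLg]
    _ = ENNReal.ofReal (2 * C₀ / (2 - p)) * ∫⁻ x, g x ^ p ∂μ := by
        rw [← ENNReal.ofReal_mul hp.le, ← ENNReal.ofReal_mul (by positivity),
          ← add_mul, ← ENNReal.ofReal_add hC₀.le (by positivity)]
        congr 2
        field_simp
        ring
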